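/- arXiv:1810.05230 — 2 statements merged into one kernel-verified Lean document; each statement's English description precedes it below -/
import Mathlib

section
/- Let J be as given, with coding graph E_J. If a vertex (μ, eν) of E_J emits a non-positive edge, i.e. there is an edge from (μ, eν) to some (μ_2, e_2ν_2) ∈ J with μ_2 ≼ ν, then (μ, eν) emits no other edge: every (μ_3, e_3ν_3) ∈ J with ν ≼ μ_3 or μ_3 ≼ ν satisfies μ_3 = μ_2. -/
/-- A finite directed multigraph. -/
structure FinGraph where
  V : Type
  E : Type
  fintV : Fintype V
  fintE : Fintype E
  src : E → V
  rng : E → V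

variable {G : FinGraph}

/-- A finite path in the graph `G`: a source vertex together with a compatible
list of edges (a vertex is a path of length 0). -/
structure FPath (G : FinGraph) where
  source : G.V
  edges : List G.E
  head_src : ∀ e ∈ edges.head?, G.src e = source
  chain : edges.Chain' fun e f => G.rng e = G.src f

/-- The range (terminal vertex) of a finite path. -/
def FPath.range (p : FPath G) : G.V :=
  p.edges.getLast?.elim p.source G.rng

/-- The length-0 path at a vertex. -/
def FPath.nil (G : FinGraph) (v : G.V) : FPath G :=
  ⟨v, [], by simp, List.isChain_nil⟩

/-- `p.Prefix q` : the path `p` is an initial segment of the path `q`. -/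
def FPath.Prefix (p q : FPath G) : Prop :=
  p.source = q.source ∧ p.edges <+: q.edges

/-- The path obtained by removing the first edge (the tail `κ` of `ν = eκ`). -/
def FPath.tail (p : FPath G) : FPath G where
  source := p.edges.head?.elim p.source G.rng
  edges := p.edges.tail
  head_src := by
    cases hp : p.edges with
    | nil => simp
    | cons a l =>
      have h := p.chain
      rw [hp] at h
      replace h := List.isChain_cons.mp h
      intro e he
      simp only [hp, List.head?_cons, Option.elim, List.tail_cons] at he ⊢
      exact (h.1 e he).symm
  chain := p.chain.tail

/-- An infinite path in the graph `G`. -/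
structure IPath (G : FinGraph) where
  edges : ℕ → G.E
  chain : ∀ i, G.rng (edges i) = G.src (edges (i + 1))

/-- The source vertex of an infinite path. -/
def IPath.source (p : IPath G) : G.V := G.src (p.edges 0)

/-- The cylinder set `Z(p)` of a finite path `p`: all infinite paths with prefix `p`. -/
def cylinder (p : FPath G) : Set (IPath G) :=
  {q | q.source = p.source ∧ ∀ i, (h : i < p.edges.length) → q.edges i = p.edges.get ⟨i, h⟩}

/-- A finite collection `S` of finite paths is a partition of the path `ν`:
the cylinder sets are pairwise disjoint with union `Z(ν)`. -/
def IsPartitionOfPath (S : Set (FPath G)) (ν : FPath G) : Prop :=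
  S.Finite ∧ (∀ p ∈ S, ∀ q ∈ S, p ≠ q → cylinder p ∩ cylinder q = ∅) ∧
    (⋃ p ∈ S, cylinder p) = cylinder ν

/-- A finite collection `S` of finite paths is a partition of the vertex `v`. -/
def IsPartitionOf (S : Set (FPath G)) (v : G.V) : Prop :=
  IsPartitionOfPath S (FPath.nil G v)

/-- Standing assumptions: no sinks, no sources, every cycle has an exit. -/
structure Standing (G : FinGraph) : Prop where
  no_sinks : ∀ v : G.V, ∃ e, G.src e = v
  no_sources : ∀ v : G.V, ∃ e, G.rng e = v
  cycles_exit : ∀ p : FPath G, p.edges ≠ [] → p.range = p.source →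
    ∃ e ∈ p.edges, ∃ f, f ≠ e ∧ G.src f = G.src e

/-- The combinatorial conditions making `u_J = Σ_{(μ,ν) ∈ J} S_μ S_ν^*` a unitary:
`J` is finite, `s(μ) = s(ν)`, `r(μ) = r(ν)`, `|ν| ≥ 1` for all `(μ,ν) ∈ J`, and both
families of cylinder sets are pairwise disjoint with union all of `E^∞`. -/
structure IsUnitaryJ (G : FinGraph) (J : Set (FPath G × FPath G)) : Prop where
  finite : J.Finite
  src_eq : ∀ p ∈ J, (Prod.fst p).source = (Prod.snd p).source
  rng_eq : ∀ p ∈ J, FPath.range (Prod.fst p) = FPath.range (Prod.snd p)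
  ne_nil : ∀ p ∈ J, (Prod.snd p).edges ≠ []
  disj₁ : ∀ p ∈ J, ∀ q ∈ J, p ≠ q → cylinder (Prod.fst p) ∩ cylinder (Prod.fst q) = ∅
  union₁ : (⋃ p ∈ J, cylinder (Prod.fst p)) = Set.univ
  disj₂ : ∀ p ∈ J, ∀ q ∈ J, p ≠ q → cylinder (Prod.snd p) ∩ cylinder (Prod.snd q) = ∅
  union₂ : (⋃ p ∈ J, cylinder (Prod.snd p)) = Set.univ

/-- Adjacency in the coding graph `E_J`: there is an edge from `p = (μ₁, e₁ν₁)` to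
`q = (μ₂, e₂ν₂)` iff the tail `ν₁` and `μ₂` are prefix-comparable
(the combinatorial content of `S_{ν₁}^* S_{μ₂} ≠ 0`). -/
def CGAdj (p q : FPath G × FPath G) : Prop :=
  FPath.Prefix p.2.tail q.1 ∨ FPath.Prefix q.1 p.2.tail

/-- The degree `|μ₂| − |ν₁|` of the coding-graph edge from `p` to `q`. -/
def cgDeg (p q : FPath G × FPath G) : ℤ :=
  (q.1.edges.length : ℤ) - (p.2.tail.edges.length : ℤ)

/-- `IsAppend p q r` : the path `r` is the concatenation `p q`. -/
def IsAppend (p q r : FPath G) : Prop :=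
  r.source = p.source ∧ q.source = p.range ∧ r.edges = p.edges ++ q.edges

/-- A finite path in the coding graph `E_J`, recorded by the (nonempty) list of
vertices of `J` it visits (a single vertex is a path of length 0). -/
structure CGPath (G : FinGraph) (J : Set (FPath G × FPath G)) where
  verts : List (FPath G × FPath G)
  ne : verts ≠ []
  mem : ∀ v ∈ verts, v ∈ J
  adj : verts.Chain' CGAdj

/-- The `E`-label of a path in the coding graph: the list of distinguished first
edges `e` of the second coordinates of the vertices it visits. -/
def CGPath.elabel {J : Set (FPath G × FPath G)} (ω : CGPath G J) : List G.E :=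
  ω.verts.filterMap fun v => v.2.edges.head?

/-- `IsLabelOf l γ` : `γ` is the `L_J`-label of the coding-graph path visiting the
vertices in the list `l` (all of whose edges are non-negative): the concatenation of
the `L_J`-labels of its edges, and the empty path at `r(μ)` for the length-0 path
at a vertex `(μ, eν)`. -/
inductive IsLabelOf : List (FPath G × FPath G) → FPath G → Prop
  | single (p : FPath G × FPath G) (γ : FPath G) :
      γ.edges = [] → γ.source = FPath.range p.1 → IsLabelOf [p] γ
  | cons (p q : FPath G × FPath G) (rest : List (FPath G × FPath G)) (α γ δ : FPath G) :
      IsAppend p.2.tail α q.1 → IsLabelOf (q :: rest) γ → IsAppend α γ δ →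
      IsLabelOf (p :: q :: rest) δ

/-- Every edge of the coding graph `E_J` is non-negative. -/
def AllEdgesNonneg (G : FinGraph) (J : Set (FPath G × FPath G)) : Prop :=
  ∀ p ∈ J, ∀ q ∈ J, CGAdj p q → 0 ≤ cgDeg p q

/-- The coding graph `E_J` contains a non-positive cycle. -/
def HasNonposCycle (G : FinGraph) (J : Set (FPath G × FPath G)) : Prop :=
  ∃ ω : CGPath G J, 2 ≤ ω.verts.length ∧ ω.verts.getLast ω.ne = ω.verts.head ω.ne ∧
    ω.verts.Chain' fun p q => cgDeg p q ≤ 0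

/-- All outgoing edges of the vertex `p` in the coding graph `E_J` are positive. -/
def AllOutPositive (G : FinGraph) (J : Set (FPath G × FPath G))
    (p : FPath G × FPath G) : Prop :=
  ∀ q ∈ J, CGAdj p q → 0 < cgDeg p q

/-- `IsSnoc p f q` : the path `q` is `p` extended by the single edge `f`. -/
def IsSnoc (p : FPath G) (f : G.E) (q : FPath G) : Prop :=
  q.source = p.source ∧ q.edges = p.edges ++ [f]

/-- `IsSplitting G J p J'` : `J'` is the splitting of `J` at the vertex `p = (μ, eν)`,
i.e. `J' = (J ∖ {(μ,eν)}) ∪ {(μf, eνf) : f ∈ E¹, s(f) = r(μ)}`. -/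
def IsSplitting (G : FinGraph) (J : Set (FPath G × FPath G)) (p : FPath G × FPath G)
    (J' : Set (FPath G × FPath G)) : Prop :=
  p ∈ J ∧ ∀ q, q ∈ J' ↔ (q ∈ J ∧ q ≠ p) ∨
    ∃ f, G.src f = FPath.range p.1 ∧ IsSnoc p.1 f q.1 ∧ IsSnoc p.2 f q.2

/-- The set of negative edges of the coding graph `E_J`. -/
def negEdgeSet (G : FinGraph) (J : Set (FPath G × FPath G)) :
    Set ((FPath G × FPath G) × (FPath G × FPath G)) :=
  {e | e.1 ∈ J ∧ e.2 ∈ J ∧ CGAdj e.1 e.2 ∧ cgDeg e.1 e.2 < 0}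

/-- `IsFinalNeg G J p q ω d` : the edge from `p` to `q` in `E_J` is a final negative
edge with destination `d`, via the zero path `ω` from `q` to `d`; the height of the
edge is `ω.verts.length - 1`. -/
def IsFinalNeg (G : FinGraph) (J : Set (FPath G × FPath G))
    (p q : FPath G × FPath G) (ω : CGPath G J) (d : FPath G × FPath G) : Prop :=
  p ∈ J ∧ q ∈ J ∧ CGAdj p q ∧ cgDeg p q < 0 ∧
    ω.verts.head ω.ne = q ∧ ω.verts.getLast ω.ne = d ∧
    (ω.verts.Chain' fun a b => cgDeg a b = 0) ∧ AllOutPositive G J d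

/-- `(E_J, E)` is left-synchronizing with delay `m` : any two paths of length `m`
(i.e. with `m+1` vertices) in `E_J` with the same `E`-label have the same source. -/
def LeftSyncDelay (G : FinGraph) (J : Set (FPath G × FPath G)) (m : ℕ) : Prop :=
  ∀ ω ξ : CGPath G J, ω.verts.length = m + 1 → ξ.verts.length = m + 1 →
    ω.elabel = ξ.elabel → ω.verts.head ω.ne = ξ.verts.head ξ.ne

/-- An infinite path in the coding graph `E_J`. -/
structure CGIPath (G : FinGraph) (J : Set (FPath G × FPath G)) where
  verts : ℕ → FPath G × FPath G
  mem : ∀ i, verts i ∈ J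
  adj : ∀ i, CGAdj (verts i) (verts (i + 1))

/-- The infinite `E`-label of an infinite coding-graph path is the infinite path `α`. -/
def ELabelInf {J : Set (FPath G × FPath G)} (ω : CGIPath G J) (α : IPath G) : Prop :=
  ∀ i, (ω.verts i).2.edges.head? = some (α.edges i)

/-- A transducer with input alphabet `A`, output alphabet `B`, a finite state set,
an initial state and a transition function. -/
structure Transducer (A B : Type) where
  S : Type
  finS : Finite S
  init : S
  tr : S → A → S × List B

/-- The state sequence of a transducer on an infinite input word. -/
def Transducer.states {A B : Type} (T : Transducer A B) (α : ℕ → A) : ℕ → T.S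
  | 0 => T.init
  | n + 1 => (T.tr (T.states α n) (α n)).1

/-- The `n`-th output block of a transducer on an infinite input word. -/
def Transducer.outBlock {A B : Type} (T : Transducer A B) (α : ℕ → A) (n : ℕ) : List B :=
  (T.tr (T.states α n) (α n)).2

/-- The concatenation of the first `n` blocks of a sequence of finite words. -/
def joinUpTo {X : Type} (f : ℕ → List X) (n : ℕ) : List X :=
  ((List.range n).map f).flatten

/-- Two infinite concatenations of sequences of finite words are equal. -/
def StreamsEq {X : Type} (f g : ℕ → List X) : Prop :=
  (∀ n, ∃ m, joinUpTo f n <+: joinUpTo g m) ∧ ∀ n, ∃ m, joinUpTo g n <+: joinUpTo f m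

/-- The type of edges of the coding graph `E_J`. -/
def CGEdgeT (G : FinGraph) (J : Set (FPath G × FPath G)) : Type :=
  {e : (FPath G × FPath G) × (FPath G × FPath G) // e.1 ∈ J ∧ e.2 ∈ J ∧ CGAdj e.1 e.2}

/-- The sequence of edges of an infinite coding-graph path. -/
def CGIPath.edgeSeq {J : Set (FPath G × FPath G)} (ω : CGIPath G J) (i : ℕ) : CGEdgeT G J :=
  ⟨(ω.verts i, ω.verts (i + 1)), ω.mem i, ω.mem (i + 1), ω.adj i⟩


/-- Auxiliary: an infinite edge sequence extending a finite path. -/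
noncomputable def extSeq (hG : ∀ v : G.V, ∃ e, G.src e = v) (r : FPath G) : ℕ → G.E
  | 0 => if h : 0 < r.edges.length then r.edges.get ⟨0, h⟩ else (hG r.source).choose
  | n + 1 => if h : n + 1 < r.edges.length then r.edges.get ⟨n + 1, h⟩
      else (hG (G.rng (extSeq hG r n))).choose

lemma cylinder_nonempty (hG : ∀ v : G.V, ∃ e, G.src e = v) (r : FPath G) :
    (cylinder r).Nonempty := by
  set f := extSeq hG r with hf
  have hget : ∀ i (h : i < r.edges.length), f i = r.edges.get ⟨i, h⟩ := by
    intro i h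
    cases i with
    | zero => simp [hf, extSeq, h]
    | succ n => simp [hf, extSeq, h]
  have hchain : ∀ i, G.rng (f i) = G.src (f (i + 1)) := by
    intro i
    by_cases h : i + 1 < r.edges.length
    · have hi : i < r.edges.length := Nat.lt_of_succ_lt h
      rw [hget i hi, hget (i+1) h]
      exact List.isChain_iff_getElem.mp r.chain i (by omega)
    · have : f (i + 1) = (hG (G.rng (f i))).choose := by
        simp [hf, extSeq, h]
      rw [this]
      exact ((hG (G.rng (f i))).choose_spec).symm
  refine ⟨⟨f, hchain⟩, ?_, ?_⟩
  · show G.src (f 0) = r.source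
    by_cases h : 0 < r.edges.length
    · rw [hget 0 h]
      apply r.head_src
      rw [List.head?_eq_getElem?, List.getElem?_eq_getElem h]
      simp [List.get_eq_getElem]
    · have : f 0 = (hG r.source).choose := by simp [hf, extSeq, h]
      rw [this]; exact (hG r.source).choose_spec
  · exact hget

lemma cylinder_anti {p q : FPath G} (h : FPath.Prefix p q) : cylinder q ⊆ cylinder p := by
  rintro x ⟨hs, hg⟩
  refine ⟨hs.trans h.1.symm, fun i hi => ?_⟩
  have hlen : i < q.edges.length := lt_of_lt_of_le hi h.2.length_le
  rw [hg i hlen]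
  have := h.2.getElem hi
  simpa using this.symm

lemma fpathPrefix_trans {a b c : FPath G} (h1 : FPath.Prefix a b) (h2 : FPath.Prefix b c) :
    FPath.Prefix a c := ⟨h1.1.trans h2.1, h1.2.trans h2.2⟩

lemma prefix_comparable_eq_fst (hG : ∀ v : G.V, ∃ e, G.src e = v)
    {J : Set (FPath G × FPath G)}
    (hJ : ∀ p ∈ J, ∀ q ∈ J, p ≠ q → cylinder (Prod.fst p) ∩ cylinder (Prod.fst q) = ∅)
    {q q' : FPath G × FPath G} (hq : q ∈ J) (hq' : q' ∈ J)
    (h : FPath.Prefix q.1 q'.1 ∨ FPath.Prefix q'.1 q.1) : q'.1 = q.1 := by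
  by_contra hne
  have hne' : q' ≠ q := fun h => hne (by rw [h])
  have hd := hJ q' hq' q hq hne'
  rcases h with h | h
  · obtain ⟨x, hx⟩ := cylinder_nonempty hG q'.1
    have : x ∈ cylinder q'.1 ∩ cylinder q.1 := ⟨hx, cylinder_anti h hx⟩
    rw [hd] at this; exact this
  · obtain ⟨x, hx⟩ := cylinder_nonempty hG q.1
    have : x ∈ cylinder q'.1 ∩ cylinder q.1 := ⟨cylinder_anti h hx, hx⟩
    rw [hd] at this; exact this

/-- Lemma 3.4(i): if the vertex `(μ, eν)` of `E_J` emits a non-positive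
edge, i.e. there is an edge to some `(μ₂, e₂ν₂) ∈ J` with `μ₂ ≼ ν`, then it emits no
other edge: every `(μ₃, e₃ν₃) ∈ J` with `ν ≼ μ₃` or `μ₃ ≼ ν` has `μ₃ = μ₂`. -/
theorem nonpos_edge_unique (G : FinGraph) (hG : Standing G)
    (J : Set (FPath G × FPath G)) (hJ : IsUnitaryJ G J)
    (p : FPath G × FPath G) (hp : p ∈ J)
    (q : FPath G × FPath G) (hq : q ∈ J) (hneg : FPath.Prefix q.1 p.2.tail) :
    ∀ q' ∈ J, (FPath.Prefix p.2.tail q'.1 ∨ FPath.Prefix q'.1 p.2.tail) →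
      q'.1 = q.1 := by
  intro q' hq' h
  apply prefix_comparable_eq_fst hG.no_sinks hJ.disj₁ hq hq'
  rcases h with h | h
  · exact Or.inl (fpathPrefix_trans hneg h)
  · rcases List.prefix_or_prefix_of_prefix hneg.2 h.2 with he | he
    · exact Or.inl ⟨hneg.1.trans h.1.symm, he⟩
    · exact Or.inr ⟨h.1.trans hneg.1.symm, he⟩
end

section
/- Let J be as given and let J' be the splitting of J at a vertex (μ, eν) ∈ J. Then J' again satisfies the defining conditions on J: every (μ', ν') ∈ J' satisfies s(μ') = s(ν'), r(μ') = r(ν') and |ν'| ≥ 1, and both families of cylinder sets {Z(μ') : (μ', ν') ∈ J'} and {Z(ν') : (μ', ν') ∈ J'} are pairwise disjoint with union E^∞. (This is the combinatorial content of the identity u_{J'} = u_J for the associated unitaries.) -/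
variable {G : FinGraph}

theorem FPath.ext' {p q : FPath G} (hs : p.source = q.source) (he : p.edges = q.edges) :
    p = q := by
  cases p; cases q; simp_all

/-- Extend a finite path by one compatible edge. -/
def FPath.snoc (p : FPath G) (f : G.E) (h : G.src f = p.range) : FPath G where
  source := p.source
  edges := p.edges ++ [f]
  head_src := by
    cases hp : p.edges with
    | nil =>
      intro e he
      simp [hp] at he
      subst he
      simpa [FPath.range, hp] using h
    | cons a l =>
      intro e he
      simp [hp] at he
      subst he
      exact p.head_src a (by simp [hp])
  chain := by
    refine List.IsChain.append p.chain (List.isChain_singleton f) ?_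
    intro x hx y hy
    simp at hy; subst hy
    have hrange : p.range = G.rng x := by
      cases hl : p.edges.getLast? with
      | none => simp [hl] at hx
      | some z =>
        rw [hl] at hx; simp at hx; subst hx; simp [FPath.range, hl]
    exact (h.trans hrange).symm

@[simp] theorem FPath.snoc_source (p : FPath G) (f : G.E) (h) :
    (p.snoc f h).source = p.source := rfl

@[simp] theorem FPath.snoc_edges (p : FPath G) (f : G.E) (h) :
    (p.snoc f h).edges = p.edges ++ [f] := rfl

theorem FPath.range_snoc (p : FPath G) (f : G.E) (h) :
    (p.snoc f h).range = G.rng f := by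
  simp [FPath.snoc, FPath.range, List.getLast?_concat]

theorem mem_cylinder_snoc {p : FPath G} {f : G.E} {h} {x : IPath G} :
    x ∈ cylinder (p.snoc f h) ↔ x ∈ cylinder p ∧ x.edges p.edges.length = f := by
  constructor
  · rintro ⟨hs, hi⟩
    refine ⟨⟨hs, fun i hl => ?_⟩, ?_⟩
    · have := hi i (by simp; omega)
      rw [this]
      simp [List.getElem_append_left hl]
    · have := hi p.edges.length (by simp)
      rw [this]; simp
  · rintro ⟨⟨hs, hi⟩, hf⟩
    refine ⟨hs, fun i hl => ?_⟩
    simp at hl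
    rcases Nat.lt_or_ge i p.edges.length with h' | h'
    · rw [hi i h']; symm; simp [List.getElem_append_left h']
    · have hieq : i = p.edges.length := by omega
      subst hieq; rw [hf]; symm; simp
 
theorem src_edge_of_mem_cylinder {p : FPath G} {x : IPath G} (hx : x ∈ cylinder p) :
    G.src (x.edges p.edges.length) = p.range := by
  obtain ⟨hs, hi⟩ := hx
  by_cases hp : p.edges = []
  · rw [FPath.range, hp]
    simpa [IPath.source, hp] using hs
  · have hpos : 0 < p.edges.length := List.length_pos_iff.2 hp
    have hn : p.edges.length - 1 < p.edges.length := Nat.sub_lt hpos one_pos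
    have h1 := hi _ hn
    have h2 := x.chain (p.edges.length - 1)
    have h3 : p.edges.length - 1 + 1 = p.edges.length := Nat.succ_pred_eq_of_pos hpos
    rw [h3] at h2
    rw [← h2, h1]
    simp [FPath.range, List.getLast?_eq_getLast hp, List.getLast_eq_getElem]

/-- the splitting `J'` of `J` at a vertex `(μ, eν) ∈ J` again satisfies the
defining conditions of `J` (the combinatorial content of `u_{J'} = u_J`). -/
theorem splitting_preserves_unitary (G : FinGraph) (hG : Standing G)
    (J : Set (FPath G × FPath G)) (hJ : IsUnitaryJ G J)
    (p : FPath G × FPath G) (hp : p ∈ J)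
    (J' : Set (FPath G × FPath G)) (hsplit : IsSplitting G J p J') :
    IsUnitaryJ G J' := by
  obtain ⟨hpJ, hmem⟩ := hsplit
  have hr : p.1.range = p.2.range := hJ.rng_eq p hpJ
  set qf : {f : G.E // G.src f = p.1.range} → FPath G × FPath G :=
    fun f => (p.1.snoc f.1 f.2, p.2.snoc f.1 (f.2.trans hr)) with hqfdef
  have hcanon : ∀ q ∈ J', (q ∈ J ∧ q ≠ p) ∨ ∃ f, q = qf f := by
    intro q hq
    rcases (hmem q).1 hq with h | ⟨f, hf, h1, h2⟩
    · exact Or.inl h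
    · exact Or.inr ⟨⟨f, hf⟩, Prod.ext (FPath.ext' h1.1 h1.2) (FPath.ext' h2.1 h2.2)⟩
  have hqf_mem : ∀ f, qf f ∈ J' := fun f =>
    (hmem _).2 (Or.inr ⟨f.1, f.2, ⟨rfl, rfl⟩, ⟨rfl, rfl⟩⟩)
  have hsub1 : ∀ f, cylinder (qf f).1 ⊆ cylinder p.1 :=
    fun f x hx => ((mem_cylinder_snoc (h := f.2)).1 hx).1
  have hsub2 : ∀ f, cylinder (qf f).2 ⊆ cylinder p.2 :=
    fun f x hx => ((mem_cylinder_snoc (h := f.2.trans hr)).1 hx).1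
  have hdn1 : ∀ f g, f ≠ g → cylinder (qf f).1 ∩ cylinder (qf g).1 = ∅ := by
    intro f g hfg
    ext x
    simp only [Set.mem_inter_iff, Set.mem_empty_iff_false, iff_false, not_and]
    intro hxf hxg
    have h1 := ((mem_cylinder_snoc (h := f.2)).1 hxf).2
    have h2 := ((mem_cylinder_snoc (h := g.2)).1 hxg).2
    exact hfg (Subtype.ext (h1.symm.trans h2))
  have hdn2 : ∀ f g, f ≠ g → cylinder (qf f).2 ∩ cylinder (qf g).2 = ∅ := by
    intro f g hfg
    ext x
    simp only [Set.mem_inter_iff, Set.mem_empty_iff_false, iff_false, not_and]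
    intro hxf hxg
    have h1 := ((mem_cylinder_snoc (h := f.2.trans hr)).1 hxf).2
    have h2 := ((mem_cylinder_snoc (h := g.2.trans hr)).1 hxg).2
    exact hfg (Subtype.ext (h1.symm.trans h2))
  haveI := G.fintE
  constructor
  · -- finite
    have hsub : J' ⊆ J ∪ Set.range qf := by
      intro q hq
      rcases hcanon q hq with h | ⟨f, rfl⟩
      · exact Or.inl h.1
      · exact Or.inr ⟨f, rfl⟩
    exact Set.Finite.subset (hJ.finite.union (Set.finite_range qf)) hsub
  · -- src_eq
    intro q hq
    rcases hcanon q hq with ⟨h, _⟩ | ⟨f, rfl⟩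
    · exact hJ.src_eq q h
    · exact hJ.src_eq p hpJ
  · -- rng_eq
    intro q hq
    rcases hcanon q hq with ⟨h, _⟩ | ⟨f, rfl⟩
    · exact hJ.rng_eq q h
    · simp [hqfdef, FPath.range_snoc]
  · -- ne_nil
    intro q hq
    rcases hcanon q hq with ⟨h, _⟩ | ⟨f, rfl⟩
    · exact hJ.ne_nil q h
    · simp [hqfdef]
  · -- disj₁
    intro q hq r hrm hne
    rcases hcanon q hq with ⟨h₁, h₁p⟩ | ⟨f, rfl⟩ <;>
      rcases hcanon r hrm with ⟨h₂, h₂p⟩ | ⟨g, rfl⟩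
    · exact hJ.disj₁ q h₁ r h₂ hne
    · refine Set.eq_empty_of_subset_empty ?_
      rw [← hJ.disj₁ q h₁ p hpJ h₁p]
      exact Set.inter_subset_inter_right _ (hsub1 g)
    · refine Set.eq_empty_of_subset_empty ?_
      rw [← hJ.disj₁ p hpJ r h₂ (Ne.symm h₂p)]
      exact Set.inter_subset_inter_left _ (hsub1 f)
    · exact hdn1 f g (fun h => hne (by rw [h]))
  · -- union₁
    apply Set.eq_univ_of_forall
    intro x
    have hx : x ∈ ⋃ q ∈ J, cylinder q.1 := by rw [hJ.union₁]; trivial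
    simp only [Set.mem_iUnion] at hx ⊢
    obtain ⟨q, hq, hxq⟩ := hx
    by_cases hqp : q = p
    · subst hqp
      exact ⟨qf ⟨x.edges q.1.edges.length, src_edge_of_mem_cylinder hxq⟩, hqf_mem _,
        (mem_cylinder_snoc (h := src_edge_of_mem_cylinder hxq)).2 ⟨hxq, rfl⟩⟩
    · exact ⟨q, (hmem q).2 (Or.inl ⟨hq, hqp⟩), hxq⟩
  · -- disj₂
    intro q hq r hrm hne
    rcases hcanon q hq with ⟨h₁, h₁p⟩ | ⟨f, rfl⟩ <;>
      rcases hcanon r hrm with ⟨h₂, h₂p⟩ | ⟨g, rfl⟩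
    · exact hJ.disj₂ q h₁ r h₂ hne
    · refine Set.eq_empty_of_subset_empty ?_
      rw [← hJ.disj₂ q h₁ p hpJ h₁p]
      exact Set.inter_subset_inter_right _ (hsub2 g)
    · refine Set.eq_empty_of_subset_empty ?_
      rw [← hJ.disj₂ p hpJ r h₂ (Ne.symm h₂p)]
      exact Set.inter_subset_inter_left _ (hsub2 f)
    · exact hdn2 f g (fun h => hne (by rw [h]))
  · -- union₂
    apply Set.eq_univ_of_forall
    intro x
    have hx : x ∈ ⋃ q ∈ J, cylinder q.2 := by rw [hJ.union₂]; trivial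
    simp only [Set.mem_iUnion] at hx ⊢
    obtain ⟨q, hq, hxq⟩ := hx
    by_cases hqp : q = p
    · subst hqp
      exact ⟨qf ⟨x.edges q.2.edges.length,
        (src_edge_of_mem_cylinder hxq).trans hr.symm⟩, hqf_mem _,
        (mem_cylinder_snoc (h := ((src_edge_of_mem_cylinder hxq).trans hr.symm).trans hr)).2
          ⟨hxq, rfl⟩⟩
    · exact ⟨q, (hmem q).2 (Or.inl ⟨hq, hqp⟩), hxq⟩
end
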